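/- Let n ≥ 1 and let V = ℂⁿ carry the permutation representation of the symmetric group Sₙ. Then for every finite-dimensional irreducible complex representation W of Sₙ, there exists a nonzero Sₙ-equivariant linear map W → V^{⊗(n−1)}, where V^{⊗(n−1)} carries the diagonal Sₙ-action. -/

import Mathlib

open scoped TensorProduct

/-- The `t`-fold tensor power `V^{⊗t}` of `V = ℂⁿ` (realized as `Fin n →₀ ℂ`, with basis
vectors indexed by `{1, …, n}`). -/
noncomputable def TPow (n t : ℕ) : Type := ⨂[ℂ] _ : Fin t, (Fin n →₀ ℂ)

noncomputable instance (n t : ℕ) : AddCommGroup (TPow n t) :=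
  inferInstanceAs (AddCommGroup (⨂[ℂ] _ : Fin t, (Fin n →₀ ℂ)))

noncomputable instance (n t : ℕ) : Module ℂ (TPow n t) :=
  inferInstanceAs (Module ℂ (⨂[ℂ] _ : Fin t, (Fin n →₀ ℂ)))

/-- The diagonal action of a permutation `σ` on `V^{⊗t}`, where `σ` acts on each tensor
factor of `V = ℂⁿ` by the permutation representation (permuting the basis vectors). -/
noncomputable def diagPerm (n t : ℕ) (σ : Equiv.Perm (Fin n)) : TPow n t →ₗ[ℂ] TPow n t :=
  PiTensorProduct.map (fun _ => Finsupp.lmapDomain ℂ ℂ (fun x : Fin n => σ • x))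

namespace Stmt7Aux

variable (n : ℕ)

/-- the inclusion Fin (n-1) → Fin n -/
def inc : Fin (n - 1) → Fin n := Fin.castLE (Nat.sub_le n 1)

lemma perm_eq_of_inc (g k : Equiv.Perm (Fin n))
    (h : ∀ i : Fin (n - 1), g (inc n i) = k (inc n i)) : g = k := by
  refine Equiv.ext fun x => ?_
  by_cases hx : (x : ℕ) < n - 1
  · have := h ⟨x, hx⟩
    simpa [inc, Fin.castLE] using this
  · by_contra hne
    obtain ⟨y, hy⟩ := k.surjective (g x)
    have hyx : y ≠ x := by rintro rfl; exact hne hy.symm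
    have hylt : (y : ℕ) < n - 1 := by
      rcases lt_or_ge (y : ℕ) (n - 1) with h' | h'
      · exact h'
      · exfalso; apply hyx
        have hn1 : 1 ≤ n := by
          rcases Nat.eq_zero_or_pos n with h0 | h1
          · exact absurd (Fin.pos x) (by simp [h0])
          · exact h1
        have hxv : (x : ℕ) = n - 1 :=
          le_antisymm (Nat.le_sub_one_of_lt x.isLt) (le_of_not_gt hx)
        have hyv : (y : ℕ) = n - 1 :=
          le_antisymm (Nat.le_sub_one_of_lt y.isLt) h'
        exact Fin.ext (hyv.trans hxv.symm)
    have h1 := h ⟨y, hylt⟩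
    have hinc : inc n ⟨(y : ℕ), hylt⟩ = y := Fin.ext rfl
    rw [hinc] at h1
    exact hyx (g.injective (h1.trans hy))

/-- The tensor `e_{g(1)} ⊗ ⋯ ⊗ e_{g(n-1)}`. -/
noncomputable def X (g : Equiv.Perm (Fin n)) : TPow n (n - 1) :=
  PiTensorProduct.tprod ℂ (fun i => Finsupp.single (g (inc n i)) (1 : ℂ))

lemma diagPerm_X (g k : Equiv.Perm (Fin n)) :
    diagPerm n (n - 1) g (X n k) = X n (g * k) := by
  have h : PiTensorProduct.map
      (fun _ : Fin (n - 1) => Finsupp.lmapDomain ℂ ℂ (fun x : Fin n => g • x))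
      (PiTensorProduct.tprod ℂ (fun i => Finsupp.single (k (inc n i)) (1 : ℂ)))
      = PiTensorProduct.tprod ℂ (fun i => Finsupp.single ((g * k) (inc n i)) (1 : ℂ)) := by
    rw [PiTensorProduct.map_tprod]
    congr 1
    funext i
    rw [Finsupp.lmapDomain_apply, Finsupp.mapDomain_single]
    rfl
  exact h

/-- evaluation functional -/
noncomputable def ψ : TPow n (n - 1) →ₗ[ℂ] ℂ :=
  PiTensorProduct.lift ((MultilinearMap.mkPiAlgebra ℂ (Fin (n - 1)) ℂ).compLinearMap
    (fun i => Finsupp.lapply (inc n i)))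

lemma ψ_X (g : Equiv.Perm (Fin n)) : ψ n (X n g) = if g = 1 then 1 else 0 := by
  have h : PiTensorProduct.lift
      ((MultilinearMap.mkPiAlgebra ℂ (Fin (n - 1)) ℂ).compLinearMap
        (fun i => Finsupp.lapply (inc n i)))
      (PiTensorProduct.tprod ℂ (fun i => Finsupp.single (g (inc n i)) (1 : ℂ)))
      = if g = 1 then 1 else 0 := by
    rw [PiTensorProduct.lift.tprod]
    simp only [MultilinearMap.compLinearMap_apply, MultilinearMap.mkPiAlgebra_apply,
      Finsupp.lapply_apply]
    by_cases hg : g = 1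
    · subst hg; simp [Finsupp.single_apply]
    · rw [if_neg hg]
      have hex : ∃ i : Fin (n - 1), g (inc n i) ≠ inc n i := by
        by_contra hc
        push_neg at hc
        exact hg (perm_eq_of_inc n g 1 (by simpa using hc))
      obtain ⟨i, hi⟩ := hex
      exact Finset.prod_eq_zero (Finset.mem_univ i)
        (by simp [Finsupp.single_apply, hi])
  exact h

end Stmt7Aux

/-- Let `n ≥ 1` and let `V = ℂⁿ` carry the permutation representation of `Sₙ`.
Every finite-dimensional irreducible complex representation `W` of `Sₙ` admits a nonzero
`Sₙ`-equivariant linear map `W → V^{⊗(n-1)}` (diagonal action on the tensor power). -/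
theorem stmt7 (n : ℕ) (hn : 1 ≤ n)
    (W : Type) [AddCommGroup W] [Module ℂ W] [FiniteDimensional ℂ W] [Nontrivial W]
    (σ : Representation ℂ (Equiv.Perm (Fin n)) W)
    (hirr : ∀ p : Submodule ℂ W, (∀ g : Equiv.Perm (Fin n), ∀ w ∈ p, σ g w ∈ p) →
      p = ⊥ ∨ p = ⊤) :
    ∃ f : W →ₗ[ℂ] TPow n (n - 1),
      f ≠ 0 ∧ ∀ (g : Equiv.Perm (Fin n)) (w : W), f (σ g w) = diagPerm n (n - 1) g (f w) := by
  classical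
  open Stmt7Aux in
  obtain ⟨i⟩ := (Module.Basis.ofVectorSpace ℂ W).index_nonempty
  set b := Module.Basis.ofVectorSpace ℂ W
  set φ : W →ₗ[ℂ] ℂ := b.coord i with hφdef
  have hφ : φ (b i) = 1 := by simp [hφdef, Module.Basis.coord_apply]
  set F : W →ₗ[ℂ] TPow n (n - 1) :=
    ∑ g : Equiv.Perm (Fin n),
      (LinearMap.toSpanSingleton ℂ _ (X n g)).comp (φ.comp (σ g⁻¹)) with hFdef
  have hFapp : ∀ w : W, F w = ∑ g : Equiv.Perm (Fin n), φ (σ g⁻¹ w) • X n g := by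
    intro w
    simp [hFdef, LinearMap.sum_apply, LinearMap.toSpanSingleton_apply]
  refine ⟨F, ?_, ?_⟩
  · intro hF0
    have h1 : ψ n (F (b i)) = 1 := by
      rw [hFapp, map_sum]
      rw [Finset.sum_eq_single (1 : Equiv.Perm (Fin n))]
      · simp [ψ_X, hφ]
      · intro g _ hg
        simp [map_smul, ψ_X, hg]
      · simp
    rw [hF0] at h1
    simp at h1
  · intro g w
    rw [hFapp, hFapp, map_sum]
    rw [← Equiv.sum_comp (Equiv.mulLeft g) (fun k => φ (σ k⁻¹ (σ g w)) • X n k)]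
    refine Finset.sum_congr rfl fun k _ => ?_
    have h1 : (Equiv.mulLeft g k)⁻¹ = k⁻¹ * g⁻¹ := by
      simp [mul_inv_rev]
    rw [map_smul, diagPerm_X]
    have h2 : φ (σ (Equiv.mulLeft g k)⁻¹ (σ g w)) = φ (σ k⁻¹ w) := by
      rw [h1]
      have hmm : σ (k⁻¹ * g⁻¹) (σ g w) = σ (k⁻¹ * g⁻¹ * g) w := by
        simp only [map_mul, Module.End.mul_apply]
      rw [hmm, mul_assoc, inv_mul_cancel, mul_one]
    rw [h2]
    rfl
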